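/- (Duality Theorem) Let K be an invertible self-dual ℓ×ℓ matrix over F_2. Then for every i with 1 ≤ i ≤ ℓ and every real z, f_{ℓ+1-i}(z) = 1 - f_i(1-z). -/

import Mathlib

/-- The support of a vector over `ZMod 2`. -/
def supp {ℓ : ℕ} (v : Fin ℓ → ZMod 2) : Set (Fin ℓ) := {j | v j ≠ 0}

/-- The Hamming weight of a vector over `ZMod 2`. -/
def wt {ℓ : ℕ} (v : Fin ℓ → ZMod 2) : ℕ :=
  (Finset.univ.filter fun j => v j ≠ 0).card

/-- The kernel code `C_i`: the span of the rows `g_{i+1}, …, g_ℓ` of `K`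
(rows of index `≥ i` in 0-based indexing). -/
def kernelCode {ℓ : ℕ} (K : Matrix (Fin ℓ) (Fin ℓ) (ZMod 2)) (i : ℕ) :
    Submodule (ZMod 2) (Fin ℓ → ZMod 2) :=
  Submodule.span (ZMod 2) {v | ∃ r : Fin ℓ, i ≤ (r : ℕ) ∧ v = K r}

/-- `e` is an uncorrectable erasure pattern for the bit-channel of (0-based) index `i`. -/
def Uncorrectable {ℓ : ℕ} (K : Matrix (Fin ℓ) (Fin ℓ) (ZMod 2)) (i : Fin ℓ)
    (e : Fin ℓ → ZMod 2) : Prop :=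
  ∃ u' u'' : Fin ℓ → ZMod 2,
    (∀ j, j < i → u' j = u'' j) ∧ u' i ≠ u'' i ∧
      ∀ j, e j = 0 → Matrix.vecMul u' K j = Matrix.vecMul u'' K j

/-- `E_{i,w}`: the number of uncorrectable erasure patterns of weight `w`
for bit-channel `i`. -/
noncomputable def Ecount {ℓ : ℕ} (K : Matrix (Fin ℓ) (Fin ℓ) (ZMod 2)) (i : Fin ℓ)
    (w : ℕ) : ℕ :=
  Nat.card {e : Fin ℓ → ZMod 2 // Uncorrectable K i e ∧ wt e = w}

/-- `f_i(z) = ∑_{w=0}^{ℓ} E_{i,w} z^w (1-z)^{ℓ-w}`. -/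
noncomputable def fpoly {ℓ : ℕ} (K : Matrix (Fin ℓ) (Fin ℓ) (ZMod 2)) (i : Fin ℓ)
    (z : ℝ) : ℝ :=
  ∑ w ∈ Finset.range (ℓ + 1), (Ecount K i w : ℝ) * z ^ w * (1 - z) ^ (ℓ - w)

/-- Dual code with respect to the standard bilinear form `⟨u,v⟩ = ∑ j, u j * v j`. -/
def dualCode {ℓ : ℕ} (C : Submodule (ZMod 2) (Fin ℓ → ZMod 2)) :
    Submodule (ZMod 2) (Fin ℓ → ZMod 2) where
  carrier := {v | ∀ c ∈ C, ∑ j, v j * c j = 0}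
  add_mem' := by
    intro a b ha hb c hc
    simpa [add_mul, Finset.sum_add_distrib] using by rw [ha c hc, hb c hc]; simp
  zero_mem' := by intro c hc; simp
  smul_mem' := by
    intro r a ha c hc
    simp only [Pi.smul_apply, smul_eq_mul, mul_assoc, ← Finset.mul_sum, Set.mem_setOf_eq]
    rw [ha c hc, mul_zero]

/-- `K` is self-dual if `C_i = C_{ℓ-i}^⊥` for all `0 ≤ i ≤ ℓ`. -/
def SelfDual {ℓ : ℕ} (K : Matrix (Fin ℓ) (Fin ℓ) (ZMod 2)) : Prop :=
  ∀ i ≤ ℓ, kernelCode K i = dualCode (kernelCode K (ℓ - i))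


/-- vectors vanishing on indices `< i`. -/
def lowZero (ℓ i : ℕ) : Submodule (ZMod 2) (Fin ℓ → ZMod 2) where
  carrier := {u | ∀ r : Fin ℓ, (r : ℕ) < i → u r = 0}
  add_mem' ha hb r hr := by rw [Pi.add_apply, ha r hr, hb r hr, add_zero]
  zero_mem' := fun r _ => rfl
  smul_mem' c u hu r hr := by rw [Pi.smul_apply, hu r hr, smul_zero]
lemma vecMul_eq_sum' {ℓ : ℕ} (u : Fin ℓ → ZMod 2) (K : Matrix (Fin ℓ) (Fin ℓ) (ZMod 2)) :
    Matrix.vecMul u K = ∑ r, u r • K r := by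
  ext j; simp [Matrix.vecMul, dotProduct, Finset.sum_apply]
lemma kernelCode_eq {ℓ : ℕ} (K : Matrix (Fin ℓ) (Fin ℓ) (ZMod 2)) (i : ℕ) :
    kernelCode K i = (lowZero ℓ i).map K.vecMulLinear := by
  apply le_antisymm
  · rw [kernelCode, Submodule.span_le]
    rintro v ⟨r, hr, rfl⟩
    refine ⟨Pi.single r 1, fun r' hr' => ?_, by simp [Matrix.vecMulLinear_apply, Matrix.row_apply']⟩
    exact Pi.single_eq_of_ne (fun h => by subst h; omega) 1
  · rintro v ⟨u, hu, rfl⟩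
    rw [Matrix.vecMulLinear_apply, vecMul_eq_sum']
    refine Submodule.sum_mem _ fun r _ => ?_
    by_cases h : (r : ℕ) < i
    · rw [hu r h, zero_smul]; exact Submodule.zero_mem _
    · exact Submodule.smul_mem _ _ (Submodule.subset_span ⟨r, le_of_not_gt h, rfl⟩)
lemma mem_kernelCode_iff {ℓ : ℕ} (K : Matrix (Fin ℓ) (Fin ℓ) (ZMod 2)) (i : ℕ) (c : Fin ℓ → ZMod 2) :
    c ∈ kernelCode K i ↔ ∃ u : Fin ℓ → ZMod 2,
      (∀ r : Fin ℓ, (r : ℕ) < i → u r = 0) ∧ c = Matrix.vecMul u K := by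
  rw [kernelCode_eq]
  constructor
  · rintro ⟨u, hu, rfl⟩; exact ⟨u, hu, (Matrix.vecMulLinear_apply K u).symm⟩
  · rintro ⟨u, hu, rfl⟩; exact ⟨u, hu, Matrix.vecMulLinear_apply K u⟩
lemma uncor_iff_exists_u {ℓ : ℕ} (K : Matrix (Fin ℓ) (Fin ℓ) (ZMod 2)) (i : Fin ℓ)
    (e : Fin ℓ → ZMod 2) :
    Uncorrectable K i e ↔ ∃ u : Fin ℓ → ZMod 2,
      (∀ r : Fin ℓ, (r : ℕ) < (i : ℕ) → u r = 0) ∧ u i ≠ 0 ∧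
        ∀ j, e j = 0 → Matrix.vecMul u K j = 0 := by
  constructor
  · rintro ⟨u', u'', h1, h2, h3⟩
    refine ⟨u' - u'', fun r hr => ?_, ?_, fun j hj => ?_⟩
    · rw [Pi.sub_apply, sub_eq_zero]; exact h1 r (Fin.lt_def.mpr hr)
    · rw [Pi.sub_apply]; exact sub_ne_zero.mpr h2
    · rw [Matrix.sub_vecMul, Pi.sub_apply, sub_eq_zero]; exact h3 j hj
  · rintro ⟨u, h1, h2, h3⟩
    refine ⟨u, 0, fun j hj => h1 j (Fin.lt_def.mp hj), by simpa using h2, fun j hj => ?_⟩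
    rw [Matrix.zero_vecMul]; exact h3 j hj
/-- coset characterization -/
lemma uncor_iff_coset {ℓ : ℕ} (K : Matrix (Fin ℓ) (Fin ℓ) (ZMod 2)) (i : Fin ℓ)
    (e : Fin ℓ → ZMod 2) :
    Uncorrectable K i e ↔ ∃ w ∈ kernelCode K ((i : ℕ) + 1),
      ∀ j, e j = 0 → (K i + w) j = 0 := by
  rw [uncor_iff_exists_u]
  constructor
  · rintro ⟨u, h1, h2, h3⟩
    have hu1 : u i = 1 := by revert h2; generalize u i = a; revert a; decide
    refine ⟨Matrix.vecMul (u - Pi.single i 1) K, (mem_kernelCode_iff ..).mpr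
      ⟨_, fun r hr => ?_, rfl⟩, fun j hj => ?_⟩
    · rw [Pi.sub_apply]
      rcases Nat.lt_or_ge (r : ℕ) (i : ℕ) with h | h
      · rw [h1 r h, Pi.single_eq_of_ne (fun hri => by subst hri; omega) 1, sub_zero]
      · have : r = i := Fin.ext (by omega)
        subst this; rw [hu1, Pi.single_eq_same, sub_self]
    · have : K i + Matrix.vecMul (u - Pi.single i 1) K = Matrix.vecMul u K := by
        rw [Matrix.sub_vecMul, Matrix.single_one_vecMul, Matrix.row_apply']; ring
      rw [this]; exact h3 j hj
  · rintro ⟨w, hw, hcov⟩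
    obtain ⟨u₂, hu₂, rfl⟩ := (mem_kernelCode_iff ..).mp hw
    refine ⟨Pi.single i 1 + u₂, fun r hr => ?_, ?_, fun j hj => ?_⟩
    · rw [Pi.add_apply, Pi.single_eq_of_ne (fun hri => by subst hri; omega) 1,
        hu₂ r (by omega), add_zero]
    · rw [Pi.add_apply, Pi.single_eq_same, hu₂ i (by omega), add_zero]; exact one_ne_zero
    · rw [Matrix.add_vecMul, Matrix.single_one_vecMul]
      exact hcov j hj
/-- membership/non-membership characterization (needs invertibility) -/
lemma uncor_iff_mem {ℓ : ℕ} {K : Matrix (Fin ℓ) (Fin ℓ) (ZMod 2)} (hK : IsUnit K.det)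
    (i : Fin ℓ) (e : Fin ℓ → ZMod 2) :
    Uncorrectable K i e ↔ ∃ c, c ∈ kernelCode K (i : ℕ) ∧ c ∉ kernelCode K ((i : ℕ) + 1) ∧
      ∀ j, e j = 0 → c j = 0 := by
  have hinj : Function.Injective (K.vecMul) :=
    Matrix.vecMul_injective_iff_isUnit.mpr ((Matrix.isUnit_iff_isUnit_det K).mpr hK)
  rw [uncor_iff_exists_u]
  constructor
  · rintro ⟨u, h1, h2, h3⟩
    refine ⟨Matrix.vecMul u K, (mem_kernelCode_iff ..).mpr ⟨u, h1, rfl⟩, ?_, h3⟩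
    intro hmem
    obtain ⟨u₂, hu₂, heq⟩ := (mem_kernelCode_iff ..).mp hmem
    exact h2 (by rw [hinj heq]; exact hu₂ i (by omega))
  · rintro ⟨c, hc, hc', hcov⟩
    obtain ⟨u, hu, rfl⟩ := (mem_kernelCode_iff ..).mp hc
    refine ⟨u, hu, fun hui => hc' ?_, hcov⟩
    refine (mem_kernelCode_iff ..).mpr ⟨u, fun r hr => ?_, rfl⟩
    rcases Nat.lt_or_ge (r : ℕ) (i : ℕ) with h | h
    · exact hu r h
    · have : r = i := Fin.ext (by omega)
      subst this; exact hui
/-- the linear functional `y ↦ ∑ j, c j * y j`. -/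
def dotF {ℓ : ℕ} (c : Fin ℓ → ZMod 2) : (Fin ℓ → ZMod 2) →ₗ[ZMod 2] ZMod 2 where
  toFun y := ∑ j, c j * y j
  map_add' a b := by simp [mul_add, Finset.sum_add_distrib]
  map_smul' r a := by simp [Finset.mul_sum, mul_left_comm]
lemma mem_dualCode {ℓ : ℕ} (C : Submodule (ZMod 2) (Fin ℓ → ZMod 2)) (v : Fin ℓ → ZMod 2) :
    v ∈ dualCode C ↔ ∀ c ∈ C, ∑ j, v j * c j = 0 := Iff.rfl
lemma dotF_vecMul {ℓ : ℕ} (c u : Fin ℓ → ZMod 2) (K : Matrix (Fin ℓ) (Fin ℓ) (ZMod 2)) :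
    dotF c (Matrix.vecMul u K) = ∑ r, u r * dotF c (K r) := by
  rw [vecMul_eq_sum', map_sum]
  exact Finset.sum_congr rfl fun r _ => by rw [map_smul, smul_eq_mul]
/-- key evaluation: if `c ⊥ C_{i+1}` and `u` vanishes below `i`, then
`⟨c, uK⟩ = u i * ⟨c, K i⟩`. -/
lemma dotF_eval {ℓ : ℕ} {K : Matrix (Fin ℓ) (Fin ℓ) (ZMod 2)} {c : Fin ℓ → ZMod 2}
    (i : Fin ℓ) (hc : c ∈ dualCode (kernelCode K ((i : ℕ) + 1)))
    {u : Fin ℓ → ZMod 2} (hu : ∀ r : Fin ℓ, (r : ℕ) < (i : ℕ) → u r = 0) :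
    dotF c (Matrix.vecMul u K) = u i * dotF c (K i) := by
  rw [dotF_vecMul]
  rw [Finset.sum_eq_single i]
  · intro r _ hri
    rcases Nat.lt_or_ge (r : ℕ) (i : ℕ) with h | h
    · rw [hu r h, zero_mul]
    · have h' : (i : ℕ) + 1 ≤ (r : ℕ) := by
        rcases Nat.eq_or_lt_of_le h with h2 | h2
        · exact absurd (Fin.ext h2.symm) hri
        · omega
      have : dotF c (K r) = 0 := hc (K r) (Submodule.subset_span ⟨r, h', rfl⟩)
      rw [this, mul_zero]
  · intro h; exact absurd (Finset.mem_univ i) h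
/-- double-dual / separation lemma. -/
lemma mem_iff_forall_dot {ℓ : ℕ} (N : Submodule (ZMod 2) (Fin ℓ → ZMod 2))
    (x : Fin ℓ → ZMod 2) :
    x ∈ N ↔ ∀ c : Fin ℓ → ZMod 2, (∀ w ∈ N, ∑ j, c j * w j = 0) → ∑ j, c j * x j = 0 := by
  constructor
  · exact fun hx c hc => hc x hx
  · intro h
    by_contra hx
    obtain ⟨f, hfx, hfN⟩ := N.exists_dual_map_eq_bot_of_notMem hx inferInstance
    set c : Fin ℓ → ZMod 2 := fun j => f (Pi.single j 1) with hcdef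
    have key : ∀ y : Fin ℓ → ZMod 2, f y = ∑ j, c j * y j := by
      intro y
      have hy : y = ∑ j, Pi.single j (y j) := (Finset.univ_sum_single y).symm
      conv_lhs => rw [hy]
      rw [map_sum]
      refine Finset.sum_congr rfl fun j _ => ?_
      have : Pi.single j (y j) = y j • (Pi.single j 1 : Fin ℓ → ZMod 2) := by
        ext k; by_cases hk : k = j
        · subst hk; simp
        · simp [Pi.single_eq_of_ne hk]
      rw [this, map_smul, smul_eq_mul, mul_comm]
    have h2 := h c (fun w hw => by
      rw [← key]
      have : f w ∈ N.map f := ⟨w, hw, rfl⟩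
      rwa [hfN, Submodule.mem_bot] at this)
    rw [← key] at h2; exact hfx h2
/-- vectors vanishing on the support of `e`. -/
def offSupp {ℓ : ℕ} (e : Fin ℓ → ZMod 2) : Submodule (ZMod 2) (Fin ℓ → ZMod 2) where
  carrier := {v | ∀ j, e j ≠ 0 → v j = 0}
  add_mem' ha hb j hj := by rw [Pi.add_apply, ha j hj, hb j hj, add_zero]
  zero_mem' := fun j _ => rfl
  smul_mem' c v hv j hj := by rw [Pi.smul_apply, hv j hj, smul_zero]
lemma cover_duality {ℓ : ℕ} (M : Submodule (ZMod 2) (Fin ℓ → ZMod 2))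
    (x e : Fin ℓ → ZMod 2) :
    (∃ w ∈ M, ∀ j, e j ≠ 0 → (x + w) j = 0) ↔
      ¬ ∃ c : Fin ℓ → ZMod 2, (∀ j, e j = 0 → c j = 0) ∧
        (∀ w ∈ M, ∑ j, c j * w j = 0) ∧ ∑ j, c j * x j ≠ 0 := by
  have hmem : (∃ w ∈ M, ∀ j, e j ≠ 0 → (x + w) j = 0) ↔ x ∈ M ⊔ offSupp e := by
    constructor
    · rintro ⟨w, hw, hcov⟩
      have hx : x = -w + (x + w) := by ring
      rw [hx]
      exact Submodule.add_mem _ (Submodule.mem_sup_left (neg_mem hw))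
        (Submodule.mem_sup_right hcov)
    · intro hx
      obtain ⟨m, hm, z, hz, rfl⟩ := Submodule.mem_sup.mp hx
      refine ⟨-m, neg_mem hm, fun j hj => ?_⟩
      have h2 : m + z + -m = z := by ring
      rw [h2]; exact hz j hj
  rw [hmem, mem_iff_forall_dot]
  constructor
  · rintro h ⟨c, hsupp, hM, hx⟩
    refine hx (h c fun w hw => ?_)
    obtain ⟨m, hm, z, hz, rfl⟩ := Submodule.mem_sup.mp hw
    have hz0 : ∑ j, c j * z j = 0 := by
      refine Finset.sum_eq_zero fun j _ => ?_
      by_cases hej : e j = 0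
      · rw [hsupp j hej, zero_mul]
      · rw [hz j hej, mul_zero]
    calc ∑ j, c j * (m + z) j = ∑ j, (c j * m j + c j * z j) := by
            refine Finset.sum_congr rfl fun j _ => ?_
            rw [Pi.add_apply, mul_add]
      _ = ∑ j, c j * m j + ∑ j, c j * z j := Finset.sum_add_distrib
      _ = 0 := by rw [hM m hm, hz0, add_zero]
  · intro h c hc
    by_contra hx
    refine h ⟨c, fun j hj => ?_, fun w hw => hc w (Submodule.mem_sup_left hw), hx⟩
    -- c j = 0 for j off the support, using single vectors in offSupp
    have hsingle : (Pi.single j 1 : Fin ℓ → ZMod 2) ∈ offSupp e := by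
      intro j' hj'
      by_cases h' : j' = j
      · subst h'; exact absurd hj hj'
      · exact Pi.single_eq_of_ne h' 1
    have := hc _ (Submodule.mem_sup_right hsingle)
    rwa [Finset.sum_eq_single j (fun b _ hb => by
        rw [Pi.single_eq_of_ne hb, mul_zero])
      (fun hj' => absurd (Finset.mem_univ j) hj'), Pi.single_eq_same, mul_one] at this
lemma zmod2_add_one_eq_zero (a : ZMod 2) : a + 1 = 0 ↔ a ≠ 0 := by revert a; decide
lemma uncor_rev_iff {ℓ : ℕ} {K : Matrix (Fin ℓ) (Fin ℓ) (ZMod 2)} (hK : IsUnit K.det)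
    (hsd : SelfDual K) (i : Fin ℓ) (e : Fin ℓ → ZMod 2) :
    Uncorrectable K i.rev e ↔ ∃ c : Fin ℓ → ZMod 2, (∀ j, e j = 0 → c j = 0) ∧
      (∀ w ∈ kernelCode K ((i : ℕ) + 1), ∑ j, c j * w j = 0) ∧
      ∑ j, c j * K i j ≠ 0 := by
  have hi := i.isLt
  have hrev : (i.rev : ℕ) = ℓ - 1 - (i : ℕ) := by rw [Fin.val_rev]; omega
  have h1 : kernelCode K ((i.rev : ℕ)) = dualCode (kernelCode K ((i : ℕ) + 1)) := by
    rw [hrev, hsd (ℓ - 1 - (i : ℕ)) (by omega)]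
    congr 2
    omega
  have h2 : kernelCode K ((i.rev : ℕ) + 1) = dualCode (kernelCode K (i : ℕ)) := by
    have : (i.rev : ℕ) + 1 = ℓ - (i : ℕ) := by omega
    rw [this, hsd (ℓ - (i : ℕ)) (by omega)]
    congr 2
    omega
  rw [uncor_iff_mem hK, h1, h2]
  constructor
  · rintro ⟨c, hc, hc', hcov⟩
    refine ⟨c, hcov, hc, fun h0 => hc' ?_⟩
    intro d hd
    obtain ⟨u, hu, rfl⟩ := (mem_kernelCode_iff ..).mp hd
    have := dotF_eval i hc hu
    have h3 : dotF c (Matrix.vecMul u K) = u i * dotF c (K i) := this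
    have h4 : dotF c (K i) = 0 := h0
    show dotF c (Matrix.vecMul u K) = 0
    rw [h3, h4, mul_zero]
  · rintro ⟨c, hcov, hdual, hne⟩
    refine ⟨c, hdual, fun hmem => hne ?_, hcov⟩
    exact hmem (K i) (Submodule.subset_span ⟨i, le_refl _, rfl⟩)
lemma uncor_rev_iff_not {ℓ : ℕ} {K : Matrix (Fin ℓ) (Fin ℓ) (ZMod 2)} (hK : IsUnit K.det)
    (hsd : SelfDual K) (i : Fin ℓ) (e : Fin ℓ → ZMod 2) :
    Uncorrectable K i.rev e ↔ ¬ Uncorrectable K i (fun j => e j + 1) := by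
  have hiff : Uncorrectable K i (fun j => e j + 1) ↔
      ∃ w ∈ kernelCode K ((i : ℕ) + 1), ∀ j, e j ≠ 0 → (K i + w) j = 0 := by
    rw [uncor_iff_coset]
    simp only [zmod2_add_one_eq_zero]
  rw [uncor_rev_iff hK hsd i e, hiff, cover_duality, not_not]
open scoped Classical
lemma Ecount_eq {ℓ : ℕ} (K : Matrix (Fin ℓ) (Fin ℓ) (ZMod 2)) (i : Fin ℓ) (w : ℕ) :
    Ecount K i w =
      (Finset.univ.filter fun e : Fin ℓ → ZMod 2 =>
        Uncorrectable K i e ∧ wt e = w).card := by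
  classical
  rw [Ecount, Nat.card_eq_fintype_card, Fintype.card_subtype]
lemma zmod2_flip_flip {ℓ : ℕ} (e : Fin ℓ → ZMod 2) :
    (fun j => (fun j' => e j' + 1) j + 1) = e := by
  funext j
  have : ∀ a : ZMod 2, a + 1 + 1 = a := by decide
  exact this (e j)
lemma wt_le {ℓ : ℕ} (e : Fin ℓ → ZMod 2) : wt e ≤ ℓ := by
  classical
  calc wt e ≤ (Finset.univ : Finset (Fin ℓ)).card := Finset.card_filter_le _ _
    _ = ℓ := by simp
lemma wt_add_wt_flip {ℓ : ℕ} (e : Fin ℓ → ZMod 2) :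
    wt e + wt (fun j => e j + 1) = ℓ := by
  classical
  have h1 : wt (fun j => e j + 1) =
      (Finset.univ.filter fun j => ¬ e j ≠ 0).card := by
    rw [wt]
    congr 1
    refine Finset.filter_congr fun j _ => ?_
    generalize e j = a
    revert a
    decide
  rw [h1, wt]
  rw [Finset.card_filter_add_card_filter_not]
  simp
lemma count_weight {ℓ : ℕ} (w : ℕ) :
    (Finset.univ.filter fun e : Fin ℓ → ZMod 2 => wt e = w).card = ℓ.choose w := by
  classical
  have := Finset.card_nbij' (s := Finset.univ.filter fun e : Fin ℓ → ZMod 2 => wt e = w)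
    (t := Finset.powersetCard w (Finset.univ : Finset (Fin ℓ)))
    (fun e => Finset.univ.filter fun j => e j ≠ 0)
    (fun S => fun j => if j ∈ S then 1 else 0)
    (fun e he => by
      rw [Finset.mem_coe, Finset.mem_powersetCard]
      exact ⟨Finset.filter_subset _ _ |>.trans (by simp), (Finset.mem_filter.mp (Finset.mem_coe.mp he)).2⟩)
    (fun S hS => by
      rw [Finset.mem_coe, Finset.mem_filter]
      refine ⟨Finset.mem_univ _, ?_⟩
      rw [wt]
      have : (Finset.univ.filter fun j => (if j ∈ S then (1 : ZMod 2) else 0) ≠ 0) = S := by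
        ext j
        by_cases hj : j ∈ S <;> simp [hj]
      rw [this]
      exact (Finset.mem_powersetCard.mp (Finset.mem_coe.mp hS)).2)
    (fun e he => by
      funext j
      by_cases hj : e j = 0 <;> simp only [Finset.mem_filter, Finset.mem_univ, true_and]
      · simp [hj]
      · have : e j = 1 := by revert hj; generalize e j = a; revert a; decide
        simp [hj, this])
    (fun S hS => by
      ext j
      by_cases hj : j ∈ S <;> simp [hj])
  rw [this, Finset.card_powersetCard]
  simp
lemma count_key {ℓ : ℕ} {K : Matrix (Fin ℓ) (Fin ℓ) (ZMod 2)} (hK : IsUnit K.det)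
    (hsd : SelfDual K) (i : Fin ℓ) (w : ℕ) (hw : w ≤ ℓ) :
    Ecount K i.rev w + Ecount K i (ℓ - w) = ℓ.choose w := by
  classical
  rw [Ecount_eq, Ecount_eq]
  have hsplit := Finset.card_filter_add_card_filter_not
    (s := Finset.univ.filter fun e : Fin ℓ → ZMod 2 => wt e = w)
    (p := fun e => Uncorrectable K i.rev e)
  rw [Finset.filter_filter, Finset.filter_filter, count_weight] at hsplit
  have hc1 : (Finset.univ.filter fun e : Fin ℓ → ZMod 2 =>
      Uncorrectable K i.rev e ∧ wt e = w).card =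
      (Finset.univ.filter fun e : Fin ℓ → ZMod 2 =>
      wt e = w ∧ Uncorrectable K i.rev e).card := by
    congr 1
    exact Finset.filter_congr fun e _ => and_comm
  have hc2 : (Finset.univ.filter fun e : Fin ℓ → ZMod 2 =>
      wt e = w ∧ ¬ Uncorrectable K i.rev e).card =
      (Finset.univ.filter fun e : Fin ℓ → ZMod 2 =>
      Uncorrectable K i e ∧ wt e = ℓ - w).card := by
    refine Finset.card_nbij' (fun e => fun j => e j + 1) (fun e => fun j => e j + 1)
      ?_ ?_ ?_ ?_
    · intro e he
      rw [Finset.mem_coe, Finset.mem_filter] at he ⊢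
      refine ⟨Finset.mem_univ _, ?_, ?_⟩
      · by_contra hu
        exact he.2.2 ((uncor_rev_iff_not hK hsd i e).mpr hu)
      · have h3 := wt_add_wt_flip e
        have h4 := he.2.1
        obtain ⟨b, hb⟩ : ∃ b, wt (fun j => e j + 1) = b := ⟨_, rfl⟩
        rw [hb] at h3 ⊢
        omega
    · intro e he
      rw [Finset.mem_coe, Finset.mem_filter] at he ⊢
      refine ⟨Finset.mem_univ _, ?_, ?_⟩
      · have h3 := wt_add_wt_flip e
        have h4 := he.2.2
        obtain ⟨b, hb⟩ : ∃ b, wt (fun j => e j + 1) = b := ⟨_, rfl⟩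
        rw [hb] at h3 ⊢
        omega
      · rw [uncor_rev_iff_not hK hsd i (fun j => e j + 1), zmod2_flip_flip]
        exact not_not_intro he.2.1
    · intro e _; exact zmod2_flip_flip e
    · intro e _; exact zmod2_flip_flip e
  omega

/-- Duality Theorem: for a self-dual kernel, `f_{ℓ+1-i}(z) = 1 - f_i(1-z)`. -/
theorem duality_theorem {ℓ : ℕ} (hℓ : 0 < ℓ)
    (K : Matrix (Fin ℓ) (Fin ℓ) (ZMod 2)) (hK : IsUnit K.det)
    (hsd : SelfDual K) (i : Fin ℓ) (z : ℝ) :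
    fpoly K i.rev z = 1 - fpoly K i (1 - z) := by
  have key : ∀ w ∈ Finset.range (ℓ + 1),
      (Ecount K i.rev w : ℝ) = (ℓ.choose w : ℝ) - (Ecount K i (ℓ - w) : ℝ) := by
    intro w hw
    rw [Finset.mem_range] at hw
    have h := count_key hK hsd i w (by omega)
    have h2 := congrArg (Nat.cast : ℕ → ℝ) h
    push_cast at h2
    linarith
  have hbinom : ∑ w ∈ Finset.range (ℓ + 1),
      (ℓ.choose w : ℝ) * z ^ w * (1 - z) ^ (ℓ - w) = 1 := by
    calc ∑ w ∈ Finset.range (ℓ + 1), (ℓ.choose w : ℝ) * z ^ w * (1 - z) ^ (ℓ - w)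
        = ∑ w ∈ Finset.range (ℓ + 1), z ^ w * (1 - z) ^ (ℓ - w) * (ℓ.choose w : ℝ) :=
        Finset.sum_congr rfl fun w _ => by ring
      _ = (z + (1 - z)) ^ ℓ := (add_pow z (1 - z) ℓ).symm
      _ = 1 := by rw [show z + (1 - z) = (1 : ℝ) by ring, one_pow]
  have hreflect : ∑ w ∈ Finset.range (ℓ + 1),
      (Ecount K i (ℓ - w) : ℝ) * z ^ w * (1 - z) ^ (ℓ - w) = fpoly K i (1 - z) := by
    rw [fpoly]
    have h := Finset.sum_range_reflect
      (fun w => (Ecount K i w : ℝ) * (1 - z) ^ w * (1 - (1 - z)) ^ (ℓ - w)) (ℓ + 1)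
    rw [← h]
    refine Finset.sum_congr rfl fun w hw => ?_
    rw [Finset.mem_range] at hw
    have h1 : ℓ + 1 - 1 - w = ℓ - w := by omega
    have h2 : ℓ - (ℓ - w) = w := by omega
    rw [h1, h2, show (1 : ℝ) - (1 - z) = z by ring]
    ring
  rw [fpoly]
  calc ∑ w ∈ Finset.range (ℓ + 1), (Ecount K i.rev w : ℝ) * z ^ w * (1 - z) ^ (ℓ - w)
      = ∑ w ∈ Finset.range (ℓ + 1),
        (((ℓ.choose w : ℝ) - (Ecount K i (ℓ - w) : ℝ)) * z ^ w * (1 - z) ^ (ℓ - w)) :=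
      Finset.sum_congr rfl fun w hw => by rw [key w hw]
    _ = (∑ w ∈ Finset.range (ℓ + 1), (ℓ.choose w : ℝ) * z ^ w * (1 - z) ^ (ℓ - w)) -
        ∑ w ∈ Finset.range (ℓ + 1), (Ecount K i (ℓ - w) : ℝ) * z ^ w * (1 - z) ^ (ℓ - w) := by
      rw [← Finset.sum_sub_distrib]
      exact Finset.sum_congr rfl fun w _ => by ring
    _ = 1 - fpoly K i (1 - z) := by rw [hbinom, hreflect]
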